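/- Let X ⊆ ℂⁿ be a compact set, 1 ≤ q ≤ n, and f ∈ C(X). If the function f̃ defined by f̃(z) = sup{φ(z) : φ ∈ P_q(X), φ ≤ f on X} is continuous on X, then f̃ ∈ P_q(X). -/

import Mathlib

open MeasureTheory Metric Filter

noncomputable section

instance (m : ℕ) : MeasurableSpace (EuclideanSpace ℂ (Fin m)) := WithLp.measurableSpace 2 (Fin m → ℂ)
instance (m : ℕ) : BorelSpace (EuclideanSpace ℂ (Fin m)) := PiLp.borelSpace 2

/-- A function on `s ⊆ ℂ^m ≅ ℝ^{2m}` is subharmonic on `s` if it is continuous on `s` and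
satisfies the sub-mean value inequality over balls contained in `s`. -/
def SubharmonicOn {m : ℕ} (f : EuclideanSpace ℂ (Fin m) → ℝ)
    (s : Set (EuclideanSpace ℂ (Fin m))) : Prop :=
  ContinuousOn f s ∧ ∀ c ∈ s, ∀ r > (0 : ℝ), closedBall c r ⊆ s →
    f c ≤ ⨍ w in ball c r, f w

/-- `f ∈ P_q(U)`: `f` is continuous on the open set `U ⊆ ℂ^n` and its restriction to the
intersection of `U` with any `q`-dimensional complex affine subspace (parametrized by a
complex-linear isometric embedding of `ℂ^q`, so that the subspace carries the metric inherited
from `ℂ^n` under the identification `ℂ^q ≅ ℝ^{2q}`) is subharmonic. -/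
def PqOn (n q : ℕ) (f : EuclideanSpace ℂ (Fin n) → ℝ)
    (U : Set (EuclideanSpace ℂ (Fin n))) : Prop :=
  ContinuousOn f U ∧
  ∀ (p : EuclideanSpace ℂ (Fin n))
    (A : EuclideanSpace ℂ (Fin q) →ₗᵢ[ℂ] EuclideanSpace ℂ (Fin n)),
    SubharmonicOn (fun w => f (p + A w)) {w | p + A w ∈ U}

/-- `f ∈ P_q(X)` for a compact set `X`: on `X`, `f` is a uniform limit of functions
belonging to `P_q` of open neighborhoods of `X`. -/
def MemPqX (n q : ℕ) (X : Set (EuclideanSpace ℂ (Fin n)))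
    (f : EuclideanSpace ℂ (Fin n) → ℝ) : Prop :=
  ∀ ε > (0 : ℝ), ∃ (U : Set (EuclideanSpace ℂ (Fin n))) (g : EuclideanSpace ℂ (Fin n) → ℝ),
    IsOpen U ∧ X ⊆ U ∧ PqOn n q g U ∧ ∀ z ∈ X, |g z - f z| < ε

/-- The upper envelope `f̃(z) = sup {φ z : φ ∈ P_q(X), φ ≤ f on X}`. -/
def ftilde (n q : ℕ) (X : Set (EuclideanSpace ℂ (Fin n)))
    (f : EuclideanSpace ℂ (Fin n) → ℝ) (z : EuclideanSpace ℂ (Fin n)) : ℝ :=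
  sSup {y | ∃ φ : EuclideanSpace ℂ (Fin n) → ℝ,
    MemPqX n q X φ ∧ (∀ x ∈ X, φ x ≤ f x) ∧ y = φ z}

-- auxiliary lemmas
lemma avg_mono_ball {m : ℕ} (c : EuclideanSpace ℂ (Fin m)) (r : ℝ)
    {F G : EuclideanSpace ℂ (Fin m) → ℝ}
    (hF : IntegrableOn F (ball c r)) (hG : IntegrableOn G (ball c r))
    (h : ∀ x, F x ≤ G x) : ⨍ w in ball c r, F w ≤ ⨍ w in ball c r, G w := by
  rw [average_eq, average_eq]
  simp only [Measure.restrict_apply_univ, smul_eq_mul]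
  exact mul_le_mul_of_nonneg_left (setIntegral_mono hF hG h) (by positivity)

lemma subh_max {m : ℕ} {F G : EuclideanSpace ℂ (Fin m) → ℝ}
    {s : Set (EuclideanSpace ℂ (Fin m))}
    (hF : SubharmonicOn F s) (hG : SubharmonicOn G s) :
    SubharmonicOn (fun w => max (F w) (G w)) s := by
  refine ⟨hF.1.sup hG.1, fun c hc r hr hsub => ?_⟩
  have hFi : IntegrableOn F (ball c r) :=
    ((hF.1.mono hsub).integrableOn_compact (isCompact_closedBall c r)).mono_set
      ball_subset_closedBall
  have hGi : IntegrableOn G (ball c r) :=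
    ((hG.1.mono hsub).integrableOn_compact (isCompact_closedBall c r)).mono_set
      ball_subset_closedBall
  have hMi : IntegrableOn (fun w => max (F w) (G w)) (ball c r) :=
    (((hF.1.sup hG.1).mono hsub).integrableOn_compact (isCompact_closedBall c r)).mono_set
      ball_subset_closedBall
  rcases le_total (F c) (G c) with hle | hle
  · calc max (F c) (G c) = G c := max_eq_right hle
      _ ≤ ⨍ w in ball c r, G w := hG.2 c hc r hr hsub
      _ ≤ ⨍ w in ball c r, max (F w) (G w) :=
        avg_mono_ball c r hGi hMi fun x => le_max_right _ _
  · calc max (F c) (G c) = F c := max_eq_left hle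
      _ ≤ ⨍ w in ball c r, F w := hF.2 c hc r hr hsub
      _ ≤ ⨍ w in ball c r, max (F w) (G w) :=
        avg_mono_ball c r hFi hMi fun x => le_max_left _ _

lemma subh_mono {m : ℕ} {F : EuclideanSpace ℂ (Fin m) → ℝ}
    {s s₁ : Set (EuclideanSpace ℂ (Fin m))}
    (hF : SubharmonicOn F s₁) (hs : s ⊆ s₁) : SubharmonicOn F s :=
  ⟨hF.1.mono hs, fun c hc r hr hsub => hF.2 c (hs hc) r hr (hsub.trans hs)⟩

lemma pq_mono {n q : ℕ} {g : EuclideanSpace ℂ (Fin n) → ℝ}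
    {U U₁ : Set (EuclideanSpace ℂ (Fin n))}
    (hg : PqOn n q g U₁) (hU : U ⊆ U₁) : PqOn n q g U := by
  refine ⟨hg.1.mono hU, fun p A => ?_⟩
  exact subh_mono (hg.2 p A) fun w hw => hU hw

lemma pq_max {n q : ℕ} {g₁ g₂ : EuclideanSpace ℂ (Fin n) → ℝ}
    {U : Set (EuclideanSpace ℂ (Fin n))}
    (h₁ : PqOn n q g₁ U) (h₂ : PqOn n q g₂ U) : PqOn n q (g₁ ⊔ g₂) U := by
  have heq : (g₁ ⊔ g₂) = fun x => max (g₁ x) (g₂ x) := rfl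
  refine ⟨by rw [heq]; exact h₁.1.sup h₂.1, fun p A => ?_⟩
  have := subh_max (h₁.2 p A) (h₂.2 p A)
  convert this using 1
  rfl

lemma pq_sup' {n q : ℕ} {ι : Type*} (s : Finset ι) (hs : s.Nonempty)
    (g : ι → EuclideanSpace ℂ (Fin n) → ℝ) (U : Set (EuclideanSpace ℂ (Fin n)))
    (h : ∀ i ∈ s, PqOn n q (g i) U) : PqOn n q (s.sup' hs g) U :=
  Finset.sup'_induction (p := fun h => PqOn n q h U) hs g (fun a ha b hb => pq_max ha hb) h

lemma pq_const {n q : ℕ} (hq : 1 ≤ q) (a : ℝ) :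
    PqOn n q (fun _ => a) Set.univ := by
  refine ⟨continuousOn_const, fun p A => ⟨continuousOn_const, fun c hc r hr hsub => ?_⟩⟩
  rw [setAverage_const (measure_ball_pos _ _ hr).ne' measure_ball_lt_top.ne]

lemma memPqX_const {n q : ℕ} (hq : 1 ≤ q) (X : Set (EuclideanSpace ℂ (Fin n))) (a : ℝ) :
    MemPqX n q X (fun _ => a) := fun ε hε =>
  ⟨Set.univ, fun _ => a, isOpen_univ, Set.subset_univ _, pq_const hq a,
    fun z _ => by simpa using hε⟩

/-- If `f ∈ C(X)` and the envelope `f̃` is continuous on `X`, then `f̃ ∈ P_q(X)`. -/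
theorem ftilde_mem_PqX (n q : ℕ) (hq : 1 ≤ q) (hqn : q ≤ n)
    (X : Set (EuclideanSpace ℂ (Fin n))) (hX : IsCompact X)
    (f : EuclideanSpace ℂ (Fin n) → ℝ) (hf : ContinuousOn f X)
    (hcont : ContinuousOn (ftilde n q X f) X) :
    MemPqX n q X (ftilde n q X f) := by
  rcases X.eq_empty_or_nonempty with rfl | hXne
  · intro ε hε
    exact ⟨Set.univ, fun _ => 0, isOpen_univ, Set.empty_subset _, pq_const hq 0,
      fun z hz => hz.elim⟩
  -- the defining set is nonempty and bounded above
  set S : EuclideanSpace ℂ (Fin n) → Set ℝ := fun z =>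
    {y | ∃ φ : EuclideanSpace ℂ (Fin n) → ℝ,
      MemPqX n q X φ ∧ (∀ x ∈ X, φ x ≤ f x) ∧ y = φ z} with hS
  obtain ⟨w, hwX, hwmin⟩ := hX.exists_isMinOn hXne hf
  have hSne : ∀ z, (S z).Nonempty := fun z =>
    ⟨f w, fun _ => f w, memPqX_const hq X (f w), fun x hx => hwmin hx, rfl⟩
  have hSbdd : ∀ x ∈ X, BddAbove (S x) := fun x hx =>
    ⟨f x, by rintro y ⟨φ, hφ, hle, rfl⟩; exact hle x hx⟩
  have hle_ft : ∀ (φ : EuclideanSpace ℂ (Fin n) → ℝ), MemPqX n q X φ →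
      (∀ x ∈ X, φ x ≤ f x) → ∀ x ∈ X, φ x ≤ ftilde n q X f x := fun φ hφ hfle x hx =>
    le_csSup (hSbdd x hx) ⟨φ, hφ, hfle, rfl⟩
  intro ε hε
  -- local data at each point of X
  have key : ∀ z, z ∈ X → ∃ (O U : Set (EuclideanSpace ℂ (Fin n)))
      (g : EuclideanSpace ℂ (Fin n) → ℝ),
      IsOpen O ∧ z ∈ O ∧ IsOpen U ∧ X ⊆ U ∧ PqOn n q g U ∧
      (∀ x ∈ O ∩ X, ftilde n q X f x - ε < g x) ∧
      (∀ x ∈ X, g x ≤ ftilde n q X f x + ε / 2) := by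
    intro z hz
    have hlt : ftilde n q X f z - ε / 4 < ftilde n q X f z := by linarith
    obtain ⟨y, hyS, hy⟩ := exists_lt_of_lt_csSup (hSne z) hlt
    obtain ⟨φ, hφ, hφle, rfl⟩ := hyS
    obtain ⟨U, g, hUo, hXU, hgPq, hgφ⟩ := hφ (ε / 4) (by linarith)
    have hgz : ftilde n q X f z - ε / 2 < g z := by
      have := hgφ z hz
      rw [abs_lt] at this
      linarith
    have hupp : ∀ x ∈ X, g x ≤ ftilde n q X f x + ε / 2 := by
      intro x hx
      have h1 := hgφ x hx
      rw [abs_lt] at h1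
      have h2 := hle_ft φ hφ hφle x hx
      linarith
    -- continuity near z gives an open set where g > ftilde - ε
    have hgc : ContinuousWithinAt g X z :=
      (hgPq.1.continuousAt (hUo.mem_nhds (hXU hz))).continuousWithinAt
    have hcw : ContinuousWithinAt (fun x => g x - ftilde n q X f x) X z :=
      hgc.sub (hcont z hz)
    have h0 : -ε < g z - ftilde n q X f z := by linarith
    have hev : ∀ᶠ x in nhdsWithin z X, -ε < g x - ftilde n q X f x :=
      hcw.eventually (eventually_gt_nhds h0)
    obtain ⟨O, hOo, hzO, hOsub⟩ := mem_nhdsWithin.mp hev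
    exact ⟨O, U, g, hOo, hzO, hUo, hXU, hgPq,
      fun x hx => by have := hOsub hx; simp only [Set.mem_setOf_eq] at this; linarith,
      hupp⟩
  choose O U g hOo hzO hUo hXU hPq hlow hupp using key
  -- finite subcover
  obtain ⟨t, htcov⟩ := hX.elim_nhds_subcover' O fun x hx => (hOo x hx).mem_nhds (hzO x hx)
  have htne : t.Nonempty := by
    obtain ⟨x₀, hx₀⟩ := hXne
    have := htcov hx₀
    simp only [Set.mem_iUnion] at this
    obtain ⟨z, hz, _⟩ := this
    exact ⟨z, hz⟩
  set V : Set (EuclideanSpace ℂ (Fin n)) := ⋂ z ∈ t, U z.1 z.2 with hV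
  have hVo : IsOpen V := isOpen_biInter_finset fun z hz => hUo z.1 z.2
  have hXV : X ⊆ V := fun x hx => Set.mem_biInter fun z hz => hXU z.1 z.2 hx
  set G : EuclideanSpace ℂ (Fin n) → ℝ := t.sup' htne (fun z => g z.1 z.2) with hG
  have hGPq : PqOn n q G V := by
    refine pq_sup' t htne _ V fun z hz => pq_mono (hPq z.1 z.2) ?_
    exact Set.biInter_subset_of_mem hz
  refine ⟨V, G, hVo, hXV, hGPq, fun x hx => ?_⟩
  have hGx : G x = t.sup' htne (fun z => g z.1 z.2 x) := Finset.sup'_apply htne _ x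
  rw [abs_lt]
  constructor
  · -- lower bound
    have := htcov hx
    simp only [Set.mem_iUnion] at this
    obtain ⟨z, hzt, hxO⟩ := this
    have h1 : ftilde n q X f x - ε < g z.1 z.2 x := hlow z.1 z.2 x ⟨hxO, hx⟩
    have h2 : g z.1 z.2 x ≤ G x := by
      rw [hGx]; exact Finset.le_sup' (fun z => g z.1 z.2 x) hzt
    linarith
  · -- upper bound
    have h1 : G x ≤ ftilde n q X f x + ε / 2 := by
      rw [hGx]
      exact Finset.sup'_le htne _ fun z hz => hupp z.1 z.2 x hx
    linarith

end
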